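/- The series Δ := ∏_{α∈R₊}(1−e^{−α}) / (∏_{α∈R₊∖R̄₊}(1−(p+1)e^{−α}) ∏_{α∈R̄₊}(1−(q+1)e^{−α})) expands as Δ = Σ_{μ∈Q₊} K_{0,−μ}(p+1,q+1) e^{−μ}, and each coefficient K_{0,−μ}(p+1,q+1) lies in ℕ[p,q]. -/

import Mathlib

open MvPolynomial

noncomputable section

variable {E : Type*} [AddCommGroup E] [Module ℝ E]

/-- The coefficient of `e^{-β}` in the product
`∏_{α ∈ R₊∖R̄₊} (1-(p+1)e^{-α})⁻¹ · ∏_{α ∈ R̄₊} (1-(q+1)e^{-α})⁻¹`,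
where `r : J → E` enumerates the positive roots `R₊` and `Jbar` indexes the parabolic
subset `R̄₊`: a multiset of positive roots with multiplicity function `f` contributes
`(p+1)^{#roots outside R̄₊} (q+1)^{#roots in R̄₊}`.  This is the (p+1,q+1)-Kostant
partition function `P_{p+1,q+1}(β)`, an element of `ℤ[p,q] = MvPolynomial (Fin 2) ℤ`. -/
def Npq {J : Type*} [Fintype J] [DecidableEq J] [DecidableEq E]
    (r : J → E) (Jbar : Finset J) (β : E) : MvPolynomial (Fin 2) ℤ :=
  ∑ᶠ f : J → ℕ,
    if (∑ j, f j • r j) = β then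
      (X 0 + 1) ^ (∑ j ∈ Jbarᶜ, f j) * (X 1 + 1) ^ (∑ j ∈ Jbar, f j)
    else 0

/-- The coefficient of `e^{-β}` in the Weyl numerator `∏_{α ∈ R₊} (1 - e^{-α})`. -/
def weylNum {J : Type*} [Fintype J] [DecidableEq E] (r : J → E) (β : E) : ℤ :=
  ∑ S : Finset J, if (∑ j ∈ S, r j) = β then (-1) ^ S.card else 0

/- ### Auxiliary material for the proof of `stmt10`. -/

set_option linter.unusedSectionVars false

namespace Stmt10Aux

abbrev P2 : Type := MvPolynomial (Fin 2) ℤ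

/-- Dickson's lemma consequence: an infinite set in `ℕ^J` contains two comparable
distinct elements. -/
lemma exists_lt_of_infinite {J : Type*} [Finite J] {A : Set (J → ℕ)} (hA : A.Infinite) :
    ∃ g₁ ∈ A, ∃ g₂ ∈ A, g₁ ≤ g₂ ∧ g₁ ≠ g₂ := by
  have hpwo : A.IsPWO :=
    Set.isPWO_of_wellQuasiOrderedLE A
  let e := hA.natEmbedding
  obtain ⟨m, n, hmn, hle⟩ := hpwo.exists_lt (f := fun k => (e k : J → ℕ)) (fun k => (e k).2)
  exact ⟨e m, (e m).2, e n, (e n).2, hle, fun h => hmn.ne (e.injective (Subtype.ext h))⟩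

variable {J : Type*} [Fintype J] [DecidableEq J]

/-- The weight of a multiplicity function in `Npq`. -/
def cf (Jbar : Finset J) (f : J → ℕ) : P2 :=
  (X 0 + 1) ^ (∑ j ∈ Jbarᶜ, f j) * (X 1 + 1) ^ (∑ j ∈ Jbar, f j)

/-- The factor `X i + 1` attached to the index `j`. -/
def yv (Jbar : Finset J) (j : J) : P2 := X (if j ∈ Jbar then 1 else 0) + 1

/-- The coefficient polynomial of a single factor
`(1-e^{-α})/(1-(p+1)e^{-α}) = 1 + Σ_{k≥1} p(p+1)^{k-1}e^{-kα}`. -/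
def hp (Jbar : Finset J) (j : J) (k : ℕ) : P2 :=
  if k = 0 then 1 else X (if j ∈ Jbar then (1 : Fin 2) else 0) * yv Jbar j ^ (k - 1)

lemma ev_yv (Jbar : Finset J) (j : J) : eval (fun _ => (1:ℤ)) (yv Jbar j) = 2 := by
  simp [yv]

lemma cf_ne_zero (Jbar : Finset J) (f : J → ℕ) : cf Jbar f ≠ 0 := by
  intro h
  have := congrArg (eval (fun _ => (1:ℤ))) h
  simp [cf] at this

lemma ev_hp (Jbar : Finset J) (j : J) (k : ℕ) :
    eval (fun _ => (1:ℤ)) (hp Jbar j k) = if k = 0 then 1 else 2 ^ (k - 1) := by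
  by_cases h : k = 0 <;> simp [hp, h, ev_yv]

lemma prod_hp_ne_zero (Jbar : Finset J) (g : J → ℕ) : (∏ j, hp Jbar j (g j)) ≠ 0 := by
  intro h
  have := congrArg (eval (fun _ => (1:ℤ))) h
  rw [map_prod] at this
  simp only [map_zero] at this
  have hpos : (0:ℤ) < ∏ j, eval (fun _ => (1:ℤ)) (hp Jbar j (g j)) := by
    apply Finset.prod_pos
    intro j _
    rw [ev_hp]
    split <;> positivity
  omega

lemma cf_eq_prod (Jbar : Finset J) (f : J → ℕ) :
    cf Jbar f = ∏ j, yv Jbar j ^ f j := by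
  rw [← Finset.prod_mul_prod_compl Jbar]
  have h1 : ∏ j ∈ Jbar, yv Jbar j ^ f j = (X 1 + 1) ^ (∑ j ∈ Jbar, f j) := by
    rw [← Finset.prod_pow_eq_pow_sum]
    exact Finset.prod_congr rfl fun j hj => by simp [yv, hj]
  have h2 : ∏ j ∈ Jbarᶜ, yv Jbar j ^ f j = (X 0 + 1) ^ (∑ j ∈ Jbarᶜ, f j) := by
    rw [← Finset.prod_pow_eq_pow_sum]
    exact Finset.prod_congr rfl fun j hj => by
      simp [yv, (Finset.mem_compl.mp hj)]
  rw [h1, h2, cf, mul_comm]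

variable {E : Type*} [AddCommGroup E] [DecidableEq E]

def addS (S : Finset J) (f : J → ℕ) : J → ℕ := fun j => f j + if j ∈ S then 1 else 0
def subS (S : Finset J) (g : J → ℕ) : J → ℕ := fun j => g j - if j ∈ S then 1 else 0

lemma sum_addS (r : J → E) (S : Finset J) (f : J → ℕ) :
    ∑ j, addS S f j • r j = (∑ j, f j • r j) + ∑ j ∈ S, r j := by
  have : ∀ j, addS S f j • r j = f j • r j + (if j ∈ S then r j else 0) := by
    intro j
    by_cases h : j ∈ S <;> simp [addS, h, add_smul]
  rw [Finset.sum_congr rfl fun j _ => this j, Finset.sum_add_distrib]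
  congr 1
  simp [Finset.sum_ite_mem]

lemma subS_addS (S : Finset J) (f : J → ℕ) : subS S (addS S f) = f := by
  funext j; by_cases h : j ∈ S <;> simp [subS, addS, h]

lemma addS_subS (S : Finset J) (g : J → ℕ) (hg : ∀ j ∈ S, g j ≠ 0) :
    addS S (subS S g) = g := by
  funext j
  by_cases h : j ∈ S
  · have := hg j h
    simp only [subS, addS, if_pos h]
    omega
  · simp [subS, addS, h]

lemma addS_injective (S : Finset J) : Function.Injective (addS S) := by
  intro f g h
  funext j
  have := congrFun h j
  simp only [addS] at this
  omega

/-- The per-`g` factorization identity. -/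
lemma per_g (Jbar : Finset J) (g : J → ℕ) :
    ∑ S : Finset J, (if ∀ j ∈ S, g j ≠ 0 then
        C ((-1:ℤ) ^ S.card) * cf Jbar (subS S g) else 0)
      = ∏ j, hp Jbar j (g j) := by
  classical
  set w : J → P2 := fun j => if g j = 0 then 0 else -(yv Jbar j ^ (g j - 1)) with hw
  have hfac : ∀ j, hp Jbar j (g j) = w j + yv Jbar j ^ g j := by
    intro j
    by_cases h : g j = 0
    · simp [hp, hw, h]
    · have hy : yv Jbar j ^ g j = yv Jbar j ^ (g j - 1) * yv Jbar j := by
        rw [← pow_succ]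
        congr 1
        omega
      have hwj : w j = -(yv Jbar j ^ (g j - 1)) := if_neg h
      rw [hp, if_neg h, hwj, hy]
      simp only [yv]
      ring
  rw [Finset.prod_congr rfl fun j _ => hfac j, Finset.prod_add, Finset.powerset_univ]
  refine (Finset.sum_congr rfl fun S _ => ?_).symm
  by_cases hS : ∀ j ∈ S, g j ≠ 0
  · rw [if_pos hS]
    have hwS : ∏ j ∈ S, w j = (-1 : P2) ^ S.card * ∏ j ∈ S, yv Jbar j ^ (g j - 1) := by
      rw [Finset.prod_congr rfl fun j hj => show w j = -(yv Jbar j ^ (g j - 1)) from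
        if_neg (hS j hj)]
      rw [Finset.prod_congr rfl fun j (hj : j ∈ S) =>
        neg_eq_neg_one_mul (yv Jbar j ^ (g j - 1)), Finset.prod_mul_distrib,
        Finset.prod_const]
    have hcf : cf Jbar (subS S g) =
        (∏ j ∈ S, yv Jbar j ^ (g j - 1)) * ∏ j ∈ Sᶜ, yv Jbar j ^ g j := by
      rw [cf_eq_prod, ← Finset.prod_mul_prod_compl S]
      congr 1
      · exact Finset.prod_congr rfl fun j hj => by simp [subS, hj]
      · exact Finset.prod_congr rfl fun j hj => by
          simp [subS, Finset.mem_compl.mp hj]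
    have hC : (C ((-1:ℤ) ^ S.card) : P2) = (-1 : P2) ^ S.card := by
      simp
    rw [hwS, hcf, hC, Finset.compl_eq_univ_sdiff]
    ring
  · rw [if_neg hS]
    push_neg at hS
    obtain ⟨j0, hj0, hg0⟩ := hS
    rw [Finset.prod_eq_zero hj0 (show w j0 = 0 from if_pos hg0), zero_mul]

/-- The candidate positive expansion of `Δ`. -/
def PosP (r : J → E) (Jbar : Finset J) (μ : E) : P2 :=
  ∑ᶠ g : J → ℕ, if (∑ j, g j • r j) = μ then ∏ j, hp Jbar j (g j) else 0

variable [Module ℝ E]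

lemma Npq_eq (r : J → E) (Jbar : Finset J) (β : E) :
    Npq r Jbar β = ∑ᶠ f : J → ℕ, if (∑ j, f j • r j) = β then cf Jbar f else 0 := rfl

lemma npq_support (r : J → E) (Jbar : Finset J) (β : E) :
    (Function.support fun f : J → ℕ =>
        if (∑ j, f j • r j) = β then cf Jbar f else 0)
      = {f | ∑ j, f j • r j = β} := by
  ext f
  by_cases h : (∑ j, f j • r j) = β <;> simp [h, cf_ne_zero]

lemma Npq_eq_sum (r : J → E) (Jbar : Finset J) (β : E)
    (hfin : {f : J → ℕ | ∑ j, f j • r j = β}.Finite) :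
    Npq r Jbar β = ∑ f ∈ hfin.toFinset, cf Jbar f := by
  rw [Npq_eq, finsum_eq_sum_of_support_subset _
    (s := hfin.toFinset) (by rw [npq_support]; simp)]
  exact Finset.sum_congr rfl fun f hf => if_pos (hfin.mem_toFinset.mp hf)

lemma Npq_of_infinite (r : J → E) (Jbar : Finset J) (β : E)
    (hinf : {f : J → ℕ | ∑ j, f j • r j = β}.Infinite) :
    Npq r Jbar β = 0 := by
  rw [Npq_eq]
  apply finsum_of_infinite_support
  rw [npq_support]
  exact hinf

lemma NpqS (r : J → E) (Jbar : Finset J) (μ : E)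
    (hfin : {g : J → ℕ | ∑ j, g j • r j = μ}.Finite) (S : Finset J) :
    Npq r Jbar (μ - ∑ j ∈ S, r j)
      = ∑ g ∈ hfin.toFinset,
          if ∀ j ∈ S, g j ≠ 0 then cf Jbar (subS S g) else 0 := by
  classical
  have hpre : {f : J → ℕ | ∑ j, f j • r j = μ - ∑ j ∈ S, r j}
      = addS S ⁻¹' {g | ∑ j, g j • r j = μ} := by
    ext f
    simp [Set.mem_preimage, sum_addS, eq_sub_iff_add_eq]
  have hAS : {f : J → ℕ | ∑ j, f j • r j = μ - ∑ j ∈ S, r j}.Finite := by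
    rw [hpre]
    exact hfin.preimage (addS_injective S).injOn
  rw [Npq_eq_sum r Jbar _ hAS, ← Finset.sum_filter]
  refine Finset.sum_nbij' (addS S) (subS S) ?_ ?_ ?_ ?_ ?_
  · intro f hf
    rw [Set.Finite.mem_toFinset] at hf
    rw [Finset.mem_filter]
    refine ⟨hfin.mem_toFinset.mpr ?_, ?_⟩
    · show ∑ j, addS S f j • r j = μ
      rw [sum_addS, hf]
      abel
    · intro j hj
      simp [addS, hj]
  · intro g hg
    rw [Finset.mem_filter, hfin.mem_toFinset] at hg
    rw [Set.Finite.mem_toFinset]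
    show ∑ j, subS S g j • r j = μ - ∑ j ∈ S, r j
    rw [eq_sub_iff_add_eq, ← sum_addS, addS_subS S g hg.2, hg.1]
  · intro f _
    exact subS_addS S f
  · intro g hg
    rw [Finset.mem_filter] at hg
    exact addS_subS S g hg.2
  · intro f _
    rw [subS_addS]

/-- The key combinatorial identity: the alternating sum of shifted partition functions
is the manifestly positive expansion. -/
lemma keyid (r : J → E) (Jbar : Finset J) (μ : E) :
    ∑ S : Finset J, C ((-1:ℤ) ^ S.card) * Npq r Jbar (μ - ∑ j ∈ S, r j)
      = PosP r Jbar μ := by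
  classical
  by_cases hfin : {g : J → ℕ | ∑ j, g j • r j = μ}.Finite
  · have hsub : (Function.support fun g : J → ℕ =>
        if (∑ j, g j • r j) = μ then ∏ j, hp Jbar j (g j) else 0)
        ⊆ ↑hfin.toFinset := by
      intro g hg
      rw [Function.mem_support] at hg
      rw [Finset.mem_coe, hfin.mem_toFinset]
      by_contra h
      exact hg (if_neg h)
    calc ∑ S : Finset J, C ((-1:ℤ) ^ S.card) * Npq r Jbar (μ - ∑ j ∈ S, r j)
        = ∑ S : Finset J, ∑ g ∈ hfin.toFinset,
            (if ∀ j ∈ S, g j ≠ 0 then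
              C ((-1:ℤ) ^ S.card) * cf Jbar (subS S g) else 0) := by
          refine Finset.sum_congr rfl fun S _ => ?_
          rw [NpqS r Jbar μ hfin S, Finset.mul_sum]
          exact Finset.sum_congr rfl fun g _ => by rw [mul_ite, mul_zero]
      _ = ∑ g ∈ hfin.toFinset, ∑ S : Finset J,
            (if ∀ j ∈ S, g j ≠ 0 then
              C ((-1:ℤ) ^ S.card) * cf Jbar (subS S g) else 0) := Finset.sum_comm
      _ = ∑ g ∈ hfin.toFinset, ∏ j, hp Jbar j (g j) :=
          Finset.sum_congr rfl fun g _ => per_g Jbar g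
      _ = PosP r Jbar μ := by
          rw [PosP, finsum_eq_sum_of_support_subset _ hsub]
          exact (Finset.sum_congr rfl fun g hg =>
            if_pos (hfin.mem_toFinset.mp hg)).symm
  · have hPos : PosP r Jbar μ = 0 := by
      rw [PosP]
      apply finsum_of_infinite_support
      have hsupp : (Function.support fun g : J → ℕ =>
          if (∑ j, g j • r j) = μ then ∏ j, hp Jbar j (g j) else 0)
          = {g | ∑ j, g j • r j = μ} := by
        ext g
        by_cases h : (∑ j, g j • r j) = μ <;> simp [h, prod_hp_ne_zero]
      rw [hsupp]
      exact hfin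
    rw [hPos]
    refine Finset.sum_eq_zero fun S _ => ?_
    suffices h : Npq r Jbar (μ - ∑ j ∈ S, r j) = 0 by rw [h, mul_zero]
    by_cases hAS : {f : J → ℕ | ∑ j, f j • r j = μ - ∑ j ∈ S, r j}.Finite
    · have hempty : {f : J → ℕ | ∑ j, f j • r j = μ - ∑ j ∈ S, r j} = ∅ := by
        by_contra hne
        obtain ⟨f0, hf0⟩ := Set.nonempty_iff_ne_empty.mpr hne
        obtain ⟨g1, hg1, g2, hg2, hle, hne'⟩ :=
          exists_lt_of_infinite (A := {g : J → ℕ | ∑ j, g j • r j = μ}) hfin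
        set d : J → ℕ := fun j => g2 j - g1 j with hd
        have hle' : ∀ j, g1 j ≤ g2 j := fun j => hle j
        have hdj : ∀ j, g1 j + d j = g2 j := by
          intro j
          have h1 := hle' j
          simp only [hd]
          omega
        have hdsum : ∑ j, d j • r j = 0 := by
          have h2 : ∑ j, g2 j • r j = ∑ j, g1 j • r j + ∑ j, d j • r j := by
            rw [← Finset.sum_add_distrib]
            refine Finset.sum_congr rfl fun j _ => ?_
            rw [← hdj j, add_smul]
          rw [hg1, hg2] at h2
          exact (left_eq_add.mp h2)
        obtain ⟨j0, hj0⟩ := Function.ne_iff.mp hne'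
        have hdj0 : d j0 ≠ 0 := by
          have h1 := hle' j0
          simp only [hd]
          omega
        have hmem : ∀ k : ℕ,
            (fun j => f0 j + k * d j) ∈
              {f : J → ℕ | ∑ j, f j • r j = μ - ∑ j ∈ S, r j} := by
          intro k
          show ∑ j, (f0 j + k * d j) • r j = μ - ∑ j ∈ S, r j
          have : ∀ j, (f0 j + k * d j) • r j = f0 j • r j + k • (d j • r j) := by
            intro j
            rw [add_smul, mul_smul]
          rw [Finset.sum_congr rfl fun j _ => this j, Finset.sum_add_distrib,
            ← Finset.smul_sum, hdsum, smul_zero, add_zero]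
          exact hf0
        have hinj : Function.Injective (fun k : ℕ => fun j => f0 j + k * d j) := by
          intro k1 k2 hk
          have := congrFun hk j0
          simp only at this
          have hd0 : 0 < d j0 := Nat.pos_of_ne_zero hdj0
          nlinarith [this]
        exact (Set.infinite_of_injective_forall_mem hinj hmem) hAS
      rw [Npq_eq_sum r Jbar _ hAS]
      rw [Set.Finite.toFinset_eq_empty.mpr hempty]
      exact Finset.sum_empty
    · exact Npq_of_infinite r Jbar _ hAS

/-- Positivity: all coefficients of `PosP` are nonnegative. -/
lemma coeff_PosP_nonneg (r : J → E) (Jbar : Finset J) (μ : E) (m : Fin 2 →₀ ℕ) :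
    0 ≤ coeff m (PosP r Jbar μ) := by
  classical
  set φ : MvPolynomial (Fin 2) ℕ →+* P2 := MvPolynomial.map (Nat.castRingHom ℤ) with hφ
  have hmem : PosP r Jbar μ ∈ φ.rangeS := by
    have hterm : ∀ g : J → ℕ,
        (if (∑ j, g j • r j) = μ then ∏ j, hp Jbar j (g j) else 0) ∈ φ.rangeS := by
      intro g
      split
      · refine prod_mem fun j _ => ?_
        rw [hp]
        split
        · exact one_mem _
        · refine mul_mem ?_ (pow_mem ?_ _)
          · exact RingHom.mem_rangeS.mpr
              ⟨X (if j ∈ Jbar then (1 : Fin 2) else 0), by rw [hφ, MvPolynomial.map_X]⟩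
          · refine RingHom.mem_rangeS.mpr
              ⟨X (if j ∈ Jbar then (1 : Fin 2) else 0) + 1, ?_⟩
            rw [hφ, map_add, MvPolynomial.map_X, map_one, yv]
      · exact zero_mem _
    rw [PosP]
    by_cases hs : (Function.support fun g : J → ℕ =>
        if (∑ j, g j • r j) = μ then ∏ j, hp Jbar j (g j) else 0).Finite
    · rw [finsum_eq_sum _ hs]
      exact sum_mem fun g _ => hterm g
    · rw [finsum_of_infinite_support hs]
      exact zero_mem _
  obtain ⟨Q, hQ⟩ := RingHom.mem_rangeS.mp hmem
  rw [← hQ, hφ, coeff_map]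
  exact Int.natCast_nonneg (coeff m Q)

/-- Rearrangement of a finsum-convolution against a finitely supported family. -/
lemma finsum_conv {ι : Type*} [Fintype ι] (b : ι → E) (a : ι → ℤ) (G : E → P2) :
    (∑ᶠ β : E, C (∑ i, if b i = β then a i else 0) * G β)
      = ∑ i, C (a i) * G (b i) := by
  classical
  have hsub : (Function.support fun β : E =>
      C (∑ i, if b i = β then a i else 0) * G β)
      ⊆ ↑(Finset.image b Finset.univ) := by
    intro β hβ
    rw [Function.mem_support] at hβ
    by_contra hmem
    apply hβ
    have hz : ∀ i ∈ Finset.univ (α := ι), (if b i = β then a i else 0) = 0 := by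
      intro i _
      rw [if_neg]
      intro h
      exact hmem (h ▸ Finset.mem_coe.mpr (Finset.mem_image_of_mem b (Finset.mem_univ i)))
    rw [Finset.sum_congr rfl hz]
    simp
  rw [finsum_eq_sum_of_support_subset _ hsub,
    Finset.sum_congr rfl fun β _ => by rw [map_sum, Finset.sum_mul],
    Finset.sum_comm]
  refine Finset.sum_congr rfl fun i _ => ?_
  have hterm : ∀ β ∈ Finset.image b Finset.univ,
      C (if b i = β then a i else 0) * G β
        = if b i = β then C (a i) * G (b i) else 0 := by
    intro β _
    by_cases h : b i = β
    · rw [if_pos h, if_pos h, h]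
    · rw [if_neg h, if_neg h, map_zero, zero_mul]
  rw [Finset.sum_congr rfl hterm, Finset.sum_ite_eq,
    if_pos (Finset.mem_image_of_mem b (Finset.mem_univ i))]

end Stmt10Aux

/-- Theorem `Th_dooublePan`, part 1.  The series
`Δ = ∏_{α∈R₊}(1−e^{−α}) / (∏_{α∈R₊∖R̄₊}(1−(p+1)e^{−α}) ∏_{α∈R̄₊}(1−(q+1)e^{−α}))`
expands as `Δ = Σ_{μ∈Q₊} K_{0,−μ}(p+1,q+1) e^{−μ}`, where
`K_{0,−μ}(p+1,q+1) = Σ_{w∈W} ε(w) P_{p+1,q+1}(w(ρ)−ρ+μ)`; and each coefficient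
`K_{0,−μ}(p+1,q+1)` lies in `ℕ[p,q]`.  The expansion is stated coefficientwise: the
coefficient of `e^{-μ}` in `Δ` is the convolution of the coefficients of the Weyl
numerator (given by the Weyl denominator formula, hypothesis `hWD`) with `N_{p,q}`. -/
theorem stmt10 {J : Type*} [Fintype J] [DecidableEq J] [DecidableEq E]
    (r : J → E) (Jbar : Finset J)
    (W : Subgroup (E ≃ₗ[ℝ] E)) [Fintype W] (ε : (E ≃ₗ[ℝ] E) → ℤ) (ρ : E)
    -- Weyl denominator formula: ∏_{α∈R₊}(1−e^{−α}) = Σ_{w∈W} ε(w) e^{w(ρ)−ρ}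
    (hWD : ∀ β : E, weylNum r β =
      ∑ w : W, if ρ - (w : E ≃ₗ[ℝ] E) ρ = β then ε w else 0)
    (K0 : E → MvPolynomial (Fin 2) ℤ)
    (hK0 : ∀ μ : E, K0 μ =
      ∑ w : W, C (ε w) * Npq r Jbar ((w : E ≃ₗ[ℝ] E) ρ - ρ + μ)) :
    (∀ μ : E, (∑ᶠ β : E, C (weylNum r β) * Npq r Jbar (μ - β)) = K0 μ) ∧
      ∀ (μ : E) (m : Fin 2 →₀ ℕ), 0 ≤ MvPolynomial.coeff m (K0 μ) := by
  classical
  have part1 : ∀ μ : E, (∑ᶠ β : E, C (weylNum r β) * Npq r Jbar (μ - β)) = K0 μ := by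
    intro μ
    have h1 : (∑ᶠ β : E, C (weylNum r β) * Npq r Jbar (μ - β))
        = ∑ w : W, C (ε w) * Npq r Jbar (μ - (ρ - (w : E ≃ₗ[ℝ] E) ρ)) := by
      rw [finsum_congr fun β => by rw [hWD β]]
      exact Stmt10Aux.finsum_conv _ _ _
    rw [h1, hK0 μ]
    refine Finset.sum_congr rfl fun w _ => ?_
    congr 1
    abel_nf
  refine ⟨part1, fun μ m => ?_⟩
  have h2 : K0 μ = Stmt10Aux.PosP r Jbar μ := by
    rw [← part1 μ]
    have h3 : (∑ᶠ β : E, C (weylNum r β) * Npq r Jbar (μ - β))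
        = ∑ S : Finset J, C ((-1:ℤ) ^ S.card) * Npq r Jbar (μ - ∑ j ∈ S, r j) := by
      simp only [weylNum]
      exact Stmt10Aux.finsum_conv (fun S : Finset J => ∑ j ∈ S, r j)
        (fun S : Finset J => (-1) ^ S.card) _
    rw [h3]
    exact Stmt10Aux.keyid r Jbar μ
  rw [h2]
  exact Stmt10Aux.coeff_PosP_nonneg r Jbar μ m

end
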